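/- Let D be a squarefree integer and let m, n ≥ 2 be coprime integers. Given z₁, z₂ ∈ ℤ[√D] with N(z₁) ≡ 1 (mod m) and N(z₂) ≡ 1 (mod n), there exists z ∈ ℤ[√D] such that N(z) ≡ 1 (mod m·n), z ≡ z₁ (mod m), and z ≡ z₂ (mod n). (This is the surjectivity underlying the canonical isomorphism 𝒢_{mn}(D) ≃ 𝒢_m(D) × 𝒢_n(D).) -/

import Mathlib

/-- Proposition 2.2 (surjectivity of the CRT map underlying
`𝒢_{mn}(D) ≃ 𝒢_m(D) × 𝒢_n(D)`). -/
theorem stmt_7 (D : ℤ) (hD : Squarefree D)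
    (m n : ℕ) (hm : 2 ≤ m) (hn : 2 ≤ n) (hmn : Nat.Coprime m n)
    (z₁ z₂ : Zsqrtd D)
    (h₁ : (m : ℤ) ∣ (z₁.norm - 1)) (h₂ : (n : ℤ) ∣ (z₂.norm - 1)) :
    ∃ z : Zsqrtd D, ((m * n : ℕ) : ℤ) ∣ (z.norm - 1) ∧
      (m : Zsqrtd D) ∣ (z - z₁) ∧ (n : Zsqrtd D) ∣ (z - z₂) := by
  have hc : IsCoprime (m : ℤ) (n : ℤ) := Nat.isCoprime_iff_coprime.mpr hmn
  obtain ⟨u, v, huv⟩ := hc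
  set a : ℤ := z₁.re * v * n + z₂.re * u * m with ha
  set b : ℤ := z₁.im * v * n + z₂.im * u * m with hb
  refine ⟨⟨a, b⟩, ?_, ?_, ?_⟩
  · -- norm condition
    have hram : (m : ℤ) ∣ a - z₁.re := ⟨u * (z₂.re - z₁.re), by linear_combination z₁.re * huv⟩
    have hbim : (m : ℤ) ∣ b - z₁.im := ⟨u * (z₂.im - z₁.im), by linear_combination z₁.im * huv⟩
    have hran : (n : ℤ) ∣ a - z₂.re := ⟨v * (z₁.re - z₂.re), by linear_combination z₂.re * huv⟩
    have hbin : (n : ℤ) ∣ b - z₂.im := ⟨v * (z₁.im - z₂.im), by linear_combination z₂.im * huv⟩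
    have hnormm : (m : ℤ) ∣ (Zsqrtd.norm (⟨a, b⟩ : Zsqrtd D) - z₁.norm) := by
      have : Zsqrtd.norm (⟨a, b⟩ : Zsqrtd D) - z₁.norm
          = (a - z₁.re) * (a + z₁.re) - D * ((b - z₁.im) * (b + z₁.im)) := by
        simp [Zsqrtd.norm]; ring
      rw [this]
      exact dvd_sub (hram.mul_right _) ((hbim.mul_right _).mul_left _)
    have hnormn : (n : ℤ) ∣ (Zsqrtd.norm (⟨a, b⟩ : Zsqrtd D) - z₂.norm) := by
      have : Zsqrtd.norm (⟨a, b⟩ : Zsqrtd D) - z₂.norm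
          = (a - z₂.re) * (a + z₂.re) - D * ((b - z₂.im) * (b + z₂.im)) := by
        simp [Zsqrtd.norm]; ring
      rw [this]
      exact dvd_sub (hran.mul_right _) ((hbin.mul_right _).mul_left _)
    have hm' : (m : ℤ) ∣ (Zsqrtd.norm (⟨a, b⟩ : Zsqrtd D) - 1) := by
      have := dvd_add hnormm h₁
      simpa using this
    have hn' : (n : ℤ) ∣ (Zsqrtd.norm (⟨a, b⟩ : Zsqrtd D) - 1) := by
      have := dvd_add hnormn h₂
      simpa using this
    have := (Nat.isCoprime_iff_coprime.mpr hmn).mul_dvd hm' hn'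
    simpa using this
  · -- ≡ z₁ (mod m)
    have : ((m : ℤ) : Zsqrtd D) ∣ ((⟨a, b⟩ : Zsqrtd D) - z₁) := by
      rw [Zsqrtd.intCast_dvd]
      constructor
      · show (m : ℤ) ∣ ((⟨a, b⟩ : Zsqrtd D) - z₁).re
        simp only [Zsqrtd.re_sub]
        exact ⟨u * (z₂.re - z₁.re), by linear_combination z₁.re * huv⟩
      · show (m : ℤ) ∣ ((⟨a, b⟩ : Zsqrtd D) - z₁).im
        simp only [Zsqrtd.im_sub]
        exact ⟨u * (z₂.im - z₁.im), by linear_combination z₁.im * huv⟩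
    simpa using this
  · have : ((n : ℤ) : Zsqrtd D) ∣ ((⟨a, b⟩ : Zsqrtd D) - z₂) := by
      rw [Zsqrtd.intCast_dvd]
      constructor
      · show (n : ℤ) ∣ ((⟨a, b⟩ : Zsqrtd D) - z₂).re
        simp only [Zsqrtd.re_sub]
        exact ⟨v * (z₁.re - z₂.re), by linear_combination z₂.re * huv⟩
      · show (n : ℤ) ∣ ((⟨a, b⟩ : Zsqrtd D) - z₂).im
        simp only [Zsqrtd.im_sub]
        exact ⟨v * (z₁.im - z₂.im), by linear_combination z₂.im * huv⟩
    simpa using this
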